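/- Let G be a simple graph on a nonempty finite vertex set V with at least one edge, and suppose G is not regular, i.e., there exist vertices u, w with deg(u) ≠ deg(w). Then (Σ_{v ∈ V} deg(v)²) / (Σ_{v ∈ V} deg(v)) > (Σ_{v ∈ V} deg(v)) / |V|. That is, the friendship paradox is strict whenever not all people have the same number of friends. -/
import Mathlib


/-- The strict friendship paradox: in a finite simple graph with at least one
edge that is not regular (two vertices have different degrees), the
degree-biased mean degree strictly exceeds the mean degree. -/
theorem friendship_paradox_strict {V : Type*} [Fintype V] [Nonempty V]
    (G : SimpleGraph V) [DecidableRel G.Adj]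
    (hE : 0 < ∑ v, G.degree v)
    (hirr : ∃ u w : V, G.degree u ≠ G.degree w) :
    (∑ v, (G.degree v : ℝ) ^ 2) / (∑ v, (G.degree v : ℝ)) >
      (∑ v, (G.degree v : ℝ)) / (Fintype.card V) := by
  set d : V → ℝ := fun v => (G.degree v : ℝ) with hd
  have hn : (0:ℝ) < (Fintype.card V : ℝ) := by
    exact_mod_cast Fintype.card_pos
  have hs : (0:ℝ) < ∑ v, d v := by
    have : (0:ℝ) < ((∑ v, G.degree v : ℕ) : ℝ) := by exact_mod_cast hE
    simpa [hd] using this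
  obtain ⟨u, w, huw⟩ := hirr
  have hdu : d u ≠ d w := by
    simp only [hd]
    exact_mod_cast huw
  have h1 : ∀ x : V, ∑ y : V, (d x - d y)^2
      = (Fintype.card V) * d x ^ 2 - 2 * d x * (∑ v, d v) + ∑ v, d v ^ 2 := by
    intro x
    have : ∀ y ∈ Finset.univ, (d x - d y)^2 = d x^2 - 2*d x*d y + d y^2 :=
      fun y _ => by ring
    rw [Finset.sum_congr rfl this]
    rw [Finset.sum_add_distrib, Finset.sum_sub_distrib, ← Finset.mul_sum,
      Finset.sum_const, Finset.card_univ, nsmul_eq_mul]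
  have expand : ∑ x : V, ∑ y : V, (d x - d y)^2
      = 2*((Fintype.card V) * ∑ v, d v^2 - (∑ v, d v)^2) := by
    rw [Finset.sum_congr rfl (fun x _ => h1 x)]
    rw [Finset.sum_add_distrib, Finset.sum_sub_distrib, ← Finset.mul_sum,
      Finset.sum_const, Finset.card_univ, nsmul_eq_mul]
    have : ∑ x : V, 2 * d x * (∑ v, d v) = 2 * (∑ v, d v)^2 := by
      rw [← Finset.sum_mul]; rw [← Finset.mul_sum]; ring
    rw [this]; ring
  have hpos : (0:ℝ) < ∑ x : V, ∑ y : V, (d x - d y)^2 := by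
    apply Finset.sum_pos'
    · intro i _
      exact Finset.sum_nonneg fun j _ => sq_nonneg _
    · refine ⟨u, Finset.mem_univ u, ?_⟩
      apply Finset.sum_pos' (fun j _ => sq_nonneg _)
      refine ⟨w, Finset.mem_univ w, ?_⟩
      have : d u - d w ≠ 0 := sub_ne_zero.mpr hdu
      positivity
  have key : (∑ v, d v)^2 < (Fintype.card V) * ∑ v, d v^2 := by
    nlinarith [expand ▸ hpos]
  rw [gt_iff_lt, div_lt_div_iff₀ hn hs]
  nlinarith [key]
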